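/- arXiv:2210.06845 — 7 statements merged into one kernel-verified Lean document; each statement's English description precedes it below -/
import Mathlib

section
/- Let H be a finite simple graph that is a non-bipartite core, let G' be a finite simple graph, let V' ⊆ V(G'), and let h' : V' → V(H). Let G be the simple graph on the disjoint union V(G') ⊔ V(H) in which two vertices of V(G') are adjacent iff they are adjacent in G', two vertices of V(H) are adjacent iff they are adjacent in H, and a vertex v ∈ V(G') is adjacent to a vertex u ∈ V(H) iff v ∈ V' and u is a neighbor of h'(v) in H. Then there exists a homomorphism from G to H if and only if there exists a homomorphism h : G' → H with h(v) = h'(v) for all v ∈ V'. -/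
/-- Reduction from homomorphism extension to plain homomorphism
for a non-bipartite core target `H`. -/
theorem stmt_0 {VG VH : Type} [Fintype VG] [Fintype VH]
    (H : SimpleGraph VH) (G' : SimpleGraph VG)
    (hcore : ∀ f : H →g H, Function.Injective f)
    (hnonbip : ¬ H.Colorable 2)
    (V' : Set VG) (h' : V' → VH)
    (G : SimpleGraph (VG ⊕ VH))
    (hGG : ∀ v u : VG, G.Adj (Sum.inl v) (Sum.inl u) ↔ G'.Adj v u)
    (hHH : ∀ u u' : VH, G.Adj (Sum.inr u) (Sum.inr u') ↔ H.Adj u u')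
    (hGH : ∀ (v : VG) (u : VH),
      G.Adj (Sum.inl v) (Sum.inr u) ↔ ∃ hv : v ∈ V', H.Adj (h' ⟨v, hv⟩) u) :
    Nonempty (G →g H) ↔
      ∃ h : G' →g H, ∀ (v : VG) (hv : v ∈ V'), h v = h' ⟨v, hv⟩ := by
  classical
  constructor
  · rintro ⟨f⟩
    -- the restriction of f to the H-side is an endomorphism of H
    set g : VH → VH := fun u => f (Sum.inr u) with hgdef
    have gadj : ∀ {x y : VH}, H.Adj x y → H.Adj (g x) (g y) := by
      intro x y hxy
      exact f.map_adj ((hHH x y).2 hxy)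
    have ginj : Function.Injective g := hcore ⟨g, fun {a b} h => gadj h⟩
    have giter : ∀ (n : ℕ) (x y : VH), H.Adj x y → H.Adj (g^[n] x) (g^[n] y) := by
      intro n
      induction n with
      | zero => simpa using fun x y h => h
      | succ n ih =>
        intro x y h
        rw [Function.iterate_succ_apply, Function.iterate_succ_apply]
        exact ih _ _ (gadj h)
    -- some positive iterate of g is the identity
    have aux : ∀ m n : ℕ, m < n → g^[m] = g^[n] → ∃ k, 0 < k ∧ ∀ x, g^[k] x = x := by
      intro m n hmn heq
      refine ⟨n - m, Nat.sub_pos_of_lt hmn, fun x => ?_⟩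
      have h1 : g^[m] (g^[n - m] x) = g^[m] x := by
        rw [← Function.iterate_add_apply, Nat.add_sub_cancel' hmn.le]
        exact (congrFun heq x).symm
      exact ginj.iterate m h1
    obtain ⟨k, hk0, hkid⟩ : ∃ k, 0 < k ∧ ∀ x, g^[k] x = x := by
      obtain ⟨m, n, hmn, heq⟩ :=
        Finite.exists_ne_map_eq_of_infinite (fun n : ℕ => (g^[n] : VH → VH))
      rcases hmn.lt_or_gt with h | h
      · exact aux m n h heq
      · exact aux n m h heq.symm
    set g' : VH → VH := g^[k - 1] with hg'def
    have hg'g : ∀ x, g' (g x) = x := by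
      intro x
      rw [hg'def, ← Function.iterate_succ_apply]
      simp only [Nat.succ_eq_add_one]
      rw [Nat.sub_add_cancel hk0]
      exact hkid x
    have g'adj : ∀ {x y : VH}, H.Adj x y → H.Adj (g' x) (g' y) := by
      intro x y hxy
      exact giter (k - 1) x y hxy
    refine ⟨⟨fun v => g' (f (Sum.inl v)), ?_⟩, ?_⟩
    · intro a b hab
      exact g'adj (f.map_adj ((hGG a b).2 hab))
    · intro v hv
      show g' (f (Sum.inl v)) = h' ⟨v, hv⟩
      set a : VH := h' ⟨v, hv⟩ with hadef
      set r : VH := g' (f (Sum.inl v)) with hrdef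
      have hra : ∀ u, H.Adj a u → H.Adj r u := by
        intro u hu
        have h1 : G.Adj (Sum.inl v) (Sum.inr u) := (hGH v u).2 ⟨hv, hu⟩
        have h2 : H.Adj (f (Sum.inl v)) (g u) := f.map_adj h1
        have h3 : H.Adj r (g' (g u)) := g'adj h2
        rwa [hg'g u] at h3
      -- the "redirect a to r" map is an endomorphism, hence injective
      set φ : VH → VH := fun x => if x = a then r else x with hφdef
      have φadj : ∀ {x y : VH}, H.Adj x y → H.Adj (φ x) (φ y) := by
        intro x y hxy
        by_cases hx : x = a <;> by_cases hy : y = a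
        · exact absurd (hx ▸ hy ▸ hxy) (H.irrefl)
        · simpa [hφdef, hx, hy] using hra y (hx ▸ hxy)
        · simpa [hφdef, hx, hy] using (hra x (hy ▸ hxy.symm)).symm
        · simpa [hφdef, hx, hy] using hxy
      have φinj : Function.Injective φ := hcore ⟨φ, fun {x y} h => φadj h⟩
      by_contra hne
      have hra' : φ r = r := by simp [hφdef, hne]
      have haa : φ a = r := by simp [hφdef]
      exact hne (φinj (hra'.trans haa.symm))
  · rintro ⟨h, hh⟩
    refine ⟨⟨Sum.elim (⇑h) id, ?_⟩⟩
    rintro (v | u) (v' | u') hadj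
    · exact h.map_adj ((hGG v v').1 hadj)
    · obtain ⟨hv, ha⟩ := (hGH v u').1 hadj
      simpa [hh v hv] using ha
    · obtain ⟨hv, ha⟩ := (hGH v' u).1 hadj.symm
      simpa [hh v' hv] using ha.symm
    · exact (hHH u u').1 hadj
end

section
/- Let H₁ and W be finite simple graphs such that the product H := H₁ × W is a connected non-bipartite core and is H₁-projective. Then for every nonempty set S ⊆ V(H₁) × V(H₁) and all w, w' ∈ V(W) there exists an (S,w,w')-gadget. -/
/-- The direct (tensor) product of two simple graphs. -/
def tensorProd {V₁ V₂ : Type} (H₁ : SimpleGraph V₁) (H₂ : SimpleGraph V₂) :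
    SimpleGraph (V₁ × V₂) where
  Adj x y := H₁.Adj x.1 y.1 ∧ H₂.Adj x.2 y.2
  symm := ⟨fun _ _ h => ⟨h.1.symm, h.2.symm⟩⟩
  loopless := ⟨fun _ h => H₁.irrefl h.1⟩

/-- The direct product of `ℓ` copies of `H₁` and one copy of `W`. -/
def powProd {V₁ VW : Type} (H₁ : SimpleGraph V₁) (W : SimpleGraph VW) (ℓ : ℕ) :
    SimpleGraph ((Fin ℓ → V₁) × VW) where
  Adj x y := (∀ i, H₁.Adj (x.1 i) (y.1 i)) ∧ W.Adj x.2 y.2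
  symm := ⟨fun _ _ h => ⟨fun i => (h.1 i).symm, h.2.symm⟩⟩
  loopless := ⟨fun _ h => W.irrefl h.2⟩

/-- `H₁ × W` is `H₁`-projective: for every `ℓ ≥ 1`, every `H₁`-idempotent
homomorphism `f : H₁^ℓ × W → H₁` is a projection onto one of the `H₁`-coordinates. -/
def H1Projective {V₁ VW : Type} (H₁ : SimpleGraph V₁) (W : SimpleGraph VW) : Prop :=
  ∀ ℓ : ℕ, 1 ≤ ℓ → ∀ f : powProd H₁ W ℓ →g H₁,
    (∀ (x : V₁) (y : VW), f (fun _ => x, y) = x) →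
    ∃ i : Fin ℓ, ∀ z : (Fin ℓ → V₁) × VW, f z = z.1 i

/-- Existence of `(S,w,w')`-gadgets when `H = H₁ × W` is a connected
non-bipartite core that is `H₁`-projective. -/
theorem stmt_1 {V₁ VW : Type} [Fintype V₁] [Fintype VW]
    (H₁ : SimpleGraph V₁) (W : SimpleGraph VW)
    (hconn : (tensorProd H₁ W).Connected)
    (hnonbip : ¬ (tensorProd H₁ W).Colorable 2)
    (hcore : ∀ f : tensorProd H₁ W →g tensorProd H₁ W, Function.Injective f)
    (hproj : H1Projective H₁ W)
    (S : Set (V₁ × V₁)) (hS : S.Nonempty) (w w' : VW) :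
    ∃ (VF : Type) (_ : Fintype VF) (F : SimpleGraph VF) (V' : Set VF)
      (h' : V' → V₁ × VW) (p q : VF),
      (∀ h : F →g tensorProd H₁ W,
        (∀ (v : VF) (hv : v ∈ V'), h v = h' ⟨v, hv⟩) → ((h p).1, (h q).1) ∈ S) ∧
      (∀ s ∈ S, ∃ h : F →g tensorProd H₁ W,
        (∀ (v : VF) (hv : v ∈ V'), h v = h' ⟨v, hv⟩) ∧
        h p = (s.1, w) ∧ h q = (s.2, w')) := by
  classical
  have hne : Nonempty S := hS.to_subtype
  obtain ⟨n, ⟨eqv⟩⟩ := Finite.exists_equiv_fin S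
  have hn : 1 ≤ n := Nat.one_le_iff_ne_zero.mpr (by
    rintro rfl
    exact (eqv hne.some).elim0)
  set a : Fin n → V₁ := fun i => ((eqv.symm i : S) : V₁ × V₁).1 with ha
  set b : Fin n → V₁ := fun i => ((eqv.symm i : S) : V₁ × V₁).2 with hb
  refine ⟨(Fin n → V₁) × VW, inferInstance, powProd H₁ W n,
    Set.range (fun xy : V₁ × VW => ((fun _ => xy.1 : Fin n → V₁), xy.2)),
    fun v => ((v : (Fin n → V₁) × VW).1 ⟨0, hn⟩, (v : (Fin n → V₁) × VW).2),
    (a, w), (b, w'), ?_, ?_⟩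
  · intro h hres
    have hid : ∀ (x : V₁) (y : VW), h ((fun _ => x), y) = (x, y) := by
      intro x y
      exact hres _ ⟨(x, y), rfl⟩
    let f : powProd H₁ W n →g H₁ :=
      { toFun := fun z => (h z).1,
        map_rel' := fun hadj => (h.map_rel hadj).1 }
    obtain ⟨i, hi⟩ := hproj n hn f (fun x y => by
      show (h ((fun _ => x), y)).1 = x
      rw [hid x y])
    have hp : (h (a, w)).1 = a i := hi (a, w)
    have hq : (h (b, w')).1 = b i := hi (b, w')
    rw [hp, hq]
    have : (a i, b i) = ((eqv.symm i : S) : V₁ × V₁) := rfl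
    rw [this]
    exact (eqv.symm i).2
  · intro s hs
    refine ⟨{ toFun := fun z => (z.1 (eqv ⟨s, hs⟩), z.2),
              map_rel' := fun hadj => ⟨hadj.1 _, hadj.2⟩ }, ?_, ?_, ?_⟩
    · rintro v ⟨xy, rfl⟩; rfl
    · show (a (eqv ⟨s, hs⟩), w) = (s.1, w)
      simp [ha]
    · show (b (eqv ⟨s, hs⟩), w') = (s.2, w')
      simp [hb]
end

section
/- Let H be a finite simple graph that is a non-bipartite projective core. Then for every nonempty set S ⊆ V(H) × V(H) there exist a finite simple graph F, a set V' ⊆ V(F), a map h' : V' → V(H), and vertices p, q ∈ V(F) such that: (i) every homomorphism h : F → H with h|_{V'} = h' satisfies (h(p), h(q)) ∈ S; and (ii) for every (s₁,s₂) ∈ S there exists a homomorphism h : F → H with h|_{V'} = h', h(p) = s₁ and h(q) = s₂. -/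
/-- The `ℓ`-fold direct (tensor) power of a simple graph `H`: two tuples are
adjacent iff they are adjacent in every coordinate (for `ℓ ≥ 1` the inequality
condition is automatic and only serves to keep the graph loopless). -/
def tensorPow {V : Type} (H : SimpleGraph V) (ℓ : ℕ) :
    SimpleGraph (Fin ℓ → V) where
  Adj x y := x ≠ y ∧ ∀ i, H.Adj (x i) (y i)
  symm := ⟨fun _ _ h => ⟨h.1.symm, fun i => (h.2 i).symm⟩⟩
  loopless := ⟨fun _ h => h.1 rfl⟩

/-- A simple graph `H` is projective if for every `ℓ ≥ 2`, every idempotent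
homomorphism `f : H^ℓ → H` is a projection onto one of the coordinates. -/
def Projective {V : Type} (H : SimpleGraph V) : Prop :=
  ∀ ℓ : ℕ, 2 ≤ ℓ → ∀ f : tensorPow H ℓ →g H,
    (∀ x : V, f (fun _ => x) = x) → ∃ i : Fin ℓ, ∀ z : Fin ℓ → V, f z = z i

/-- Existence of `S`-gadgets for a non-bipartite projective core `H`. -/
theorem stmt_3 {V : Type} [Fintype V] (H : SimpleGraph V)
    (hcore : ∀ f : H →g H, Function.Injective f)
    (hnonbip : ¬ H.Colorable 2)
    (hproj : Projective H)
    (S : Set (V × V)) (hS : S.Nonempty) :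
    ∃ (VF : Type) (_ : Fintype VF) (F : SimpleGraph VF) (V' : Set VF)
      (h' : V' → V) (p q : VF),
      (∀ h : F →g H,
        (∀ (v : VF) (hv : v ∈ V'), h v = h' ⟨v, hv⟩) → (h p, h q) ∈ S) ∧
      (∀ s ∈ S, ∃ h : F →g H,
        (∀ (v : VF) (hv : v ∈ V'), h v = h' ⟨v, hv⟩) ∧ h p = s.1 ∧ h q = s.2) := by
  classical
  haveI : Fintype S := Fintype.ofFinite S
  set m := Fintype.card S with hm
  have hm1 : 1 ≤ m := Fintype.card_pos_iff.mpr (Set.Nonempty.to_subtype hS)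
  set n := m + 1 with hn
  have hn2 : 2 ≤ n := by omega
  have hn0 : 0 < n := by omega
  let e : S ≃ Fin m := Fintype.equivFin S
  -- a surjective enumeration of `S` by `Fin n`
  let g : Fin n → S := fun i =>
    e.symm (if h : (i : ℕ) < m then ⟨(i : ℕ), h⟩ else ⟨0, hm1⟩)
  have hg : Function.Surjective g := by
    intro a
    refine ⟨⟨(e a : ℕ), lt_of_lt_of_le (e a).isLt (by omega)⟩, ?_⟩
    simp only [g, dif_pos (e a).isLt]
    simpa using e.symm_apply_apply a
  refine ⟨Fin n → V, inferInstance, tensorPow H n, {z | ∃ x : V, z = fun _ => x},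
    fun z => z.1 ⟨0, hn0⟩, fun j => ((g j) : V × V).1, fun j => ((g j) : V × V).2, ?_, ?_⟩
  · intro h hres
    have hid : ∀ x : V, h (fun _ => x) = x := by
      intro x
      have := hres (fun _ => x) ⟨x, rfl⟩
      simpa using this
      
    obtain ⟨i, hi⟩ := hproj n hn2 h hid
    have : (h fun j => ((g j) : V × V).1, h fun j => ((g j) : V × V).2)
        = ((g i) : V × V) := by
      rw [hi, hi]
    rw [this]
    exact (g i).2
  · rintro s hs
    obtain ⟨i, hi⟩ := hg ⟨s, hs⟩
    refine ⟨⟨fun z => z i, ?_⟩, ?_, ?_, ?_⟩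
    · intro x y hxy
      exact hxy.2 i
    · rintro v ⟨x, rfl⟩
      rfl
    · show ((g i : V × V)).1 = s.1
      rw [hi]
    · show ((g i : V × V)).2 = s.2
      rw [hi]
end

section
/- Let H be a finite simple graph that is a non-bipartite projective core, let a, b, c be three distinct vertices of H, and let t ≥ 1 be an integer. Then there exist a finite simple graph F, a set V' ⊆ V(F), a map h' : V' → V(H), and a set R ⊆ V(F) with |R| = t such that: (i) every homomorphism h : F → H with h|_{V'} = h' satisfies h(u) ∈ {a,b,c} for all u ∈ R, and h(v) = a for at least one v ∈ R; and (ii) for every v ∈ R there exists a homomorphism h : F → H with h|_{V'} = h', h(v) = a, and h(u) ∈ {b,c} for all u ∈ R with u ≠ v. -/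
/-- Projection homomorphism from the tensor power. -/
def tensorProj {V : Type} (H : SimpleGraph V) (ℓ : ℕ) (j : Fin ℓ) :
    tensorPow H ℓ →g H where
  toFun z := z j
  map_rel' := fun h => h.2 j

/-- Existence of `t`-or-gadgets for a non-bipartite projective core `H`. -/
theorem stmt_4 {V : Type} [Fintype V] (H : SimpleGraph V)
    (hcore : ∀ f : H →g H, Function.Injective f)
    (hnonbip : ¬ H.Colorable 2)
    (hproj : Projective H)
    (a b c : V) (hab : a ≠ b) (hac : a ≠ c) (hbc : b ≠ c)
    (t : ℕ) (ht : 1 ≤ t) :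
    ∃ (VF : Type) (_ : Fintype VF) (F : SimpleGraph VF) (V' : Set VF)
      (h' : V' → V) (R : Set VF), R.ncard = t ∧
      (∀ h : F →g H,
        (∀ (v : VF) (hv : v ∈ V'), h v = h' ⟨v, hv⟩) →
        (∀ u ∈ R, h u ∈ ({a, b, c} : Set V)) ∧ (∃ v ∈ R, h v = a)) ∧
      (∀ v ∈ R, ∃ h : F →g H,
        (∀ (x : VF) (hx : x ∈ V'), h x = h' ⟨x, hx⟩) ∧
        h v = a ∧ ∀ u ∈ R, u ≠ v → h u ∈ ({b, c} : Set V)) := by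
  classical
  set ℓ : ℕ := max t 2 with hℓdef
  have h2ℓ : 2 ≤ ℓ := le_max_right _ _
  have htℓ : t ≤ ℓ := le_max_left _ _
  have hℓpos : 0 < ℓ := by omega
  set e : Fin t → (Fin ℓ → V) := fun i j =>
    if (j : ℕ) = (i : ℕ) ∨ t ≤ (j : ℕ) then a else b with hedef
  have he_eval : ∀ (i : Fin t) (j : Fin ℓ),
      e i j = if (j : ℕ) = (i : ℕ) ∨ t ≤ (j : ℕ) then a else b := fun _ _ => rfl
  have he_inj : Function.Injective e := by
    intro i i' hii'
    by_contra hne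
    have key := congrFun hii' ⟨(i : ℕ), lt_of_lt_of_le i.2 htℓ⟩
    rw [he_eval, he_eval, if_pos (Or.inl rfl), if_neg] at key
    · exact hab key
    · push_neg
      exact ⟨fun h => hne (Fin.ext h), i.2⟩
  refine ⟨Fin ℓ → V, inferInstance, tensorPow H ℓ,
    {f | ∃ x : V, f = fun _ => x},
    fun p => p.1 ⟨0, hℓpos⟩, Set.range e, ?_, ?_, ?_⟩
  · have h1 := Nat.card_range_of_injective he_inj
    rw [Nat.card_coe_set_eq] at h1
    rw [h1]
    simp
  · intro h hpin
    have hid : ∀ x : V, h (fun _ => x) = x := by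
      intro x
      have := hpin (fun _ => x) ⟨x, rfl⟩
      simpa using this
    obtain ⟨j, hj⟩ := hproj ℓ h2ℓ h hid
    constructor
    · rintro u ⟨i, rfl⟩
      rw [hj, he_eval]
      split
      · exact Set.mem_insert _ _
      · exact Set.mem_insert_of_mem _ (Set.mem_insert _ _)
    · by_cases hjt : (j : ℕ) < t
      · refine ⟨e ⟨j, hjt⟩, Set.mem_range_self _, ?_⟩
        rw [hj, he_eval, if_pos (Or.inl rfl)]
      · refine ⟨e ⟨0, ht⟩, Set.mem_range_self _, ?_⟩
        rw [hj, he_eval, if_pos (Or.inr (by omega))]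
  · rintro v ⟨i, rfl⟩
    refine ⟨tensorProj H ℓ ⟨(i : ℕ), lt_of_lt_of_le i.2 htℓ⟩, ?_, ?_, ?_⟩
    · rintro x ⟨y, rfl⟩
      rfl
    · show e i ⟨(i : ℕ), _⟩ = a
      rw [he_eval, if_pos (Or.inl rfl)]
    · rintro u ⟨i', rfl⟩ hne
      have hii' : (i : ℕ) ≠ (i' : ℕ) := by
        intro hh
        exact hne (congrArg e (Fin.ext hh.symm))
      show e i' ⟨(i : ℕ), _⟩ ∈ ({b, c} : Set V)
      rw [he_eval, if_neg]
      · exact Set.mem_insert _ _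
      · push_neg
        exact ⟨hii', i.2⟩
end

section
/- Let H be a finite simple (loopless) graph on n ≥ 1 vertices. Then s(H) = 2^n − 2 if and only if H is a complete graph. -/
/-- The signature set `S(T)` of a set `T` of vertices of `H`: the set of common
neighbors of all vertices of `T`. -/
def sigSet {V : Type} (H : SimpleGraph V) (T : Set V) : Set V :=
  ⋂ t ∈ T, H.neighborSet t

/-- The family `𝒮(H)` of all nonempty signature sets of nonempty vertex sets. -/
def sigFamily {V : Type} (H : SimpleGraph V) : Set (Set V) :=
  {S | S.Nonempty ∧ ∃ T : Set V, T.Nonempty ∧ sigSet H T = S}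

/-- The signature number `s(H)`, i.e. the cardinality of `𝒮(H)`. -/
noncomputable def sigNum {V : Type} (H : SimpleGraph V) : ℕ := (sigFamily H).ncard

lemma sigSet_subset_compl {V : Type} (H : SimpleGraph V) (T : Set V) :
    sigSet H T ⊆ Tᶜ := by
  intro x hx hxT
  have hx' : x ∈ H.neighborSet x := Set.mem_iInter₂.1 hx x hxT
  exact H.irrefl hx'

lemma sigFamily_subset {V : Type} (H : SimpleGraph V) :
    sigFamily H ⊆ {S : Set V | S.Nonempty ∧ S ≠ Set.univ} := by
  rintro S ⟨hne, T, ⟨t, ht⟩, rfl⟩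
  refine ⟨hne, fun h => ?_⟩
  have : t ∈ sigSet H T := h ▸ Set.mem_univ t
  exact sigSet_subset_compl H T this ht

lemma sigSet_complete {V : Type} (H : SimpleGraph V)
    (hc : ∀ u v : V, u ≠ v → H.Adj u v) (T : Set V) : sigSet H T = Tᶜ := by
  ext x
  constructor
  · exact fun hx => sigSet_subset_compl H T hx
  · intro hx
    refine Set.mem_iInter₂.2 fun t ht => ?_
    exact hc t x (fun h => hx (h ▸ ht))

lemma Ucard {V : Type} [Fintype V] (hn : 1 ≤ Fintype.card V) :
    ({S : Set V | S.Nonempty ∧ S ≠ Set.univ}).ncard = 2 ^ Fintype.card V - 2 := by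
  have hne : (∅ : Set V) ≠ Set.univ := by
    intro h
    obtain ⟨v⟩ := Fintype.card_pos_iff.1 hn
    exact (h ▸ Set.mem_univ v : v ∈ (∅ : Set V))
  have h1 : {S : Set V | S.Nonempty ∧ S ≠ Set.univ}
      = (Set.univ : Set (Set V)) \ {∅, Set.univ} := by
    ext S
    simp [Set.nonempty_iff_ne_empty]
  rw [h1, Set.ncard_diff (Set.subset_univ _), Set.ncard_univ,
    Set.ncard_pair hne, Nat.card_eq_fintype_card, Fintype.card_set]

/-- `s(H) = 2^n − 2` holds exactly for complete graphs. -/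
theorem stmt_10 {V : Type} [Fintype V] (H : SimpleGraph V)
    (hn : 1 ≤ Fintype.card V) :
    sigNum H = 2 ^ Fintype.card V - 2 ↔ ∀ u v : V, u ≠ v → H.Adj u v := by
  constructor
  · intro h
    by_contra hc
    push_neg at hc
    obtain ⟨u, v, huv, hadj⟩ := hc
    have hmem : (Set.univ \ {u} : Set V) ∈ {S : Set V | S.Nonempty ∧ S ≠ Set.univ} := by
      constructor
      · exact ⟨v, Set.mem_univ v, by simpa using huv.symm⟩
      · intro h'
        have : u ∈ (Set.univ \ {u} : Set V) := h'.symm ▸ Set.mem_univ u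
        simp at this
    have hnot : (Set.univ \ {u} : Set V) ∉ sigFamily H := by
      rintro ⟨hne, T, ⟨t, ht⟩, hT⟩
      -- T ⊆ {u}
      have hTu : T ⊆ {u} := by
        intro s hs
        by_contra hsu
        have : s ∈ sigSet H T → False := fun hx =>
          sigSet_subset_compl H T hx hs
        exact this (hT ▸ ⟨Set.mem_univ s, hsu⟩)
      have htu : t = u := hTu ht
      have hv : v ∈ sigSet H T := hT ▸ ⟨Set.mem_univ v, by simpa using huv.symm⟩
      have : H.Adj t v := Set.mem_iInter₂.1 hv t ht
      exact hadj (htu ▸ this)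
    have hss : sigFamily H ⊂ {S : Set V | S.Nonempty ∧ S ≠ Set.univ} :=
      ⟨sigFamily_subset H, fun hsub => hnot (hsub hmem)⟩
    have := Set.ncard_lt_ncard hss (Set.toFinite _)
    rw [Ucard hn] at this
    rw [sigNum] at h
    omega
  · intro hc
    have hfam : sigFamily H = {S : Set V | S.Nonempty ∧ S ≠ Set.univ} := by
      apply Set.Subset.antisymm (sigFamily_subset H)
      rintro S ⟨hne, hSu⟩
      refine ⟨hne, Sᶜ, ?_, ?_⟩
      · exact Set.nonempty_compl.2 hSu
      · rw [sigSet_complete H hc, compl_compl]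
    rw [sigNum, hfam, Ucard hn]
end

section
/- Let H be a finite simple graph with at least two vertices that is a core. Then s(H) ≥ |V(H)|. -/
/-- a core with at least two vertices satisfies `s(H) ≥ |V(H)|`. -/
theorem stmt_13 {V : Type} [Fintype V] (H : SimpleGraph V)
    (hn : 2 ≤ Fintype.card V)
    (hcore : ∀ f : H →g H, Function.Injective f) :
    Fintype.card V ≤ sigNum H := by
  classical
  -- every vertex has a neighbor
  have hne : ∀ v : V, (H.neighborSet v).Nonempty := by
    intro v
    by_contra h
    rw [Set.not_nonempty_iff_eq_empty] at h
    obtain ⟨w, hw⟩ := Fintype.exists_ne_of_one_lt_card (by omega) v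
    let g : V → V := fun x => if x = v then w else x
    have hg : ∀ a b : V, H.Adj a b → H.Adj (g a) (g b) := by
      intro a b hab
      have ha : a ≠ v := by
        intro h'; subst h'
        have : b ∈ H.neighborSet a := hab
        rw [h] at this; exact this
      have hb : b ≠ v := by
        intro h'; subst h'
        have : a ∈ H.neighborSet b := hab.symm
        rw [h] at this; exact this
      simpa [g, ha, hb] using hab
    have hinj := hcore ⟨g, fun {a b} hab => hg a b hab⟩
    have : g v = g w := by simp [g, hw]
    exact hw (hinj this).symm
  -- neighborSet is injective
  have hinj : Function.Injective (H.neighborSet) := by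
    intro u v huv
    by_contra hne'
    let g : V → V := fun x => if x = u then v else x
    have hg : ∀ a b : V, H.Adj a b → H.Adj (g a) (g b) := by
      intro a b hab
      by_cases ha : a = u
      · subst ha
        have hb : b ≠ a := fun h => H.loopless.irrefl a (h ▸ hab)
        have hbv : H.Adj v b := by
          have : b ∈ H.neighborSet a := hab
          rw [huv] at this; exact this
        by_cases hbu : b = a
        · exact absurd hbu hb
        · simpa [g, hbu] using hbv
      · by_cases hb : b = u
        · subst hb
          have hav : H.Adj a v := by
            have : a ∈ H.neighborSet b := hab.symm
            rw [huv] at this; exact this.symm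
          simpa [g, ha] using hav
        · simpa [g, ha, hb] using hab
    have hinj2 := hcore ⟨g, fun {a b} hab => hg a b hab⟩
    have : g u = g v := by simp [g, Ne.symm hne']
    exact hne' (hinj2 this)
  -- neighborhoods belong to the signature family
  have hsub : Set.range (H.neighborSet) ⊆ sigFamily H := by
    rintro _ ⟨v, rfl⟩
    exact ⟨hne v, {v}, Set.singleton_nonempty v, by simp [sigSet]⟩
  calc Fintype.card V = (Set.range (H.neighborSet)).ncard := by
        rw [← Set.image_univ, Set.ncard_image_of_injective _ hinj, Set.ncard_univ, Nat.card_eq_fintype_card]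
    _ ≤ sigNum H := Set.ncard_le_ncard hsub (Set.toFinite _)
end

section
/- Let H' be a finite simple graph, let U ⊆ V(H'), and let H = H'[U] be the subgraph of H' induced by U. Then s(H) ≤ s(H'). -/
lemma mem_sigSet {V : Type} {H : SimpleGraph V} {T : Set V} {x : V} :
    x ∈ sigSet H T ↔ ∀ t ∈ T, H.Adj t x := by
  simp [sigSet]

/-- the signature number of an induced subgraph is at most that
of the whole graph. -/
theorem stmt_14 {V' : Type} [Fintype V'] (H' : SimpleGraph V') (U : Set V') :
    sigNum (H'.induce U) ≤ sigNum H' := by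
  classical
  set G := H'.induce U with hG
  set φ : Set ↥U → Set V' := fun S => sigSet H' (Subtype.val '' S) with hφ
  -- recovery lemma: S is determined by φ S
  have key : ∀ S ∈ sigFamily G, ∀ x : ↥U, x ∈ S ↔ (x : V') ∈ sigSet H' (φ S) := by
    rintro S ⟨hSne, T, hTne, hST⟩ x
    constructor
    · intro hx
      rw [mem_sigSet]
      intro y hy
      rw [hφ, mem_sigSet] at hy
      exact (hy _ ⟨x, hx, rfl⟩).symm
    · intro hx
      rw [mem_sigSet] at hx
      rw [← hST, mem_sigSet]
      intro t ht
      have htφ : (t : V') ∈ φ S := by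
        rw [hφ, mem_sigSet]
        rintro _ ⟨s, hs, rfl⟩
        rw [← hST, mem_sigSet] at hs
        exact (hs t ht).symm
      exact hx _ htφ
  have hsub : φ '' sigFamily G ⊆ sigFamily H' := by
    rintro _ ⟨S, hS, rfl⟩
    obtain ⟨hSne, T, hTne, hST⟩ := hS
    obtain ⟨t, ht⟩ := hTne
    have htφ : (t : V') ∈ φ S := by
      rw [hφ, mem_sigSet]
      rintro _ ⟨s, hs, rfl⟩
      rw [← hST, mem_sigSet] at hs
      exact (hs t ht).symm
    exact ⟨⟨_, htφ⟩, Subtype.val '' S, hSne.image _, rfl⟩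
  have hinj : Set.InjOn φ (sigFamily G) := by
    intro S1 h1 S2 h2 h
    ext x
    rw [key S1 h1 x, key S2 h2 x, h]
  calc sigNum G = (φ '' sigFamily G).ncard := (Set.ncard_image_of_injOn hinj).symm
    _ ≤ (sigFamily H').ncard := Set.ncard_le_ncard hsub (Set.toFinite _)
end
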